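/- arXiv:1802.02012 — 2 statements merged into one kernel-verified Lean document; each statement's English description precedes it below -/
import Mathlib

section
/- Let A be a Banach algebra and φ a character (nonzero multiplicative linear functional) on A. If A is strong pseudo-amenable, then A is approximately left φ-amenable. -/
noncomputable section

open ContinuousLinearMap NormedSpace

/-- The topological dual of a normed space, as in the older Mathlib (`NormedSpace.Dual`). -/
abbrev NormedSpace.Dual (𝕜 : Type*) [NontriviallyNormedField 𝕜] (E : Type*)
    [SeminormedAddCommGroup E] [NormedSpace 𝕜 E] : Type _ :=
  E →L[𝕜] 𝕜

/-- A directed index system for nets. -/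
structure DirSys : Type 1 where
  ι : Type
  le : ι → ι → Prop
  refl : ∀ i, le i i
  trans : ∀ {i j k}, le i j → le j k → le i k
  nonempty : Nonempty ι
  directed : ∀ i j, ∃ k, le i k ∧ le j k

/-- Convergence of a net indexed by a directed system, in a (pseudo)metric space. -/
def DirSys.Tendsto (D : DirSys) {X : Type*} [PseudoMetricSpace X] (m : D.ι → X) (x : X) : Prop :=
  ∀ ε : ℝ, 0 < ε → ∃ i, ∀ j, D.le i j → dist (m j) x < ε

variable (A : Type*) [NonUnitalNormedRing A] [NormedSpace ℂ A]
  [IsScalarTower ℂ A A] [SMulCommClass ℂ A A]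

/-- The continuous bilinear forms on `A`, i.e. the dual space of the projective tensor
product `A ⊗̂ A`. -/
abbrev BilForms := A →L[ℂ] NormedSpace.Dual ℂ A

/-- The bidual `(A ⊗̂ A)**` of the projective tensor product, realized concretely as the
dual space of the space of continuous bilinear forms on `A` (the latter being canonically,
isometrically, the dual of `A ⊗̂ A`). -/
abbrev TensorBidual := NormedSpace.Dual ℂ (BilForms A)

/-- The bidual `A**` of `A`. -/
abbrev Bidual := NormedSpace.Dual ℂ (NormedSpace.Dual ℂ A)

variable {A}

/-- The elementary tensor `x ⊗ y`, viewed inside `(A ⊗̂ A)**` via the canonical isometric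
embedding of `A ⊗̂ A` into its bidual. -/
def elemT (x y : A) : TensorBidual A :=
  (ContinuousLinearMap.apply ℂ ℂ y).comp (ContinuousLinearMap.apply ℂ (NormedSpace.Dual ℂ A) x)

variable (A)

/-- The canonical isometric copy of `A ⊗̂ A` inside its bidual: the closure of the linear
span of the elementary tensors. -/
def ptp : Submodule ℂ (TensorBidual A) :=
  (Submodule.span ℂ {m : TensorBidual A | ∃ x y : A, m = elemT x y}).topologicalClosure

/-- The map `f ↦ f·a` on bilinear forms, `(f·a)(x,y) = f(ax, y)`; predual of the left
module action of `A` on `(A ⊗̂ A)**`. -/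
def leftBil (a : A) : BilForms A →L[ℂ] BilForms A :=
  (compL ℂ A A (NormedSpace.Dual ℂ A)).flip (ContinuousLinearMap.mul ℂ A a)

/-- The map `f ↦ a·f` on bilinear forms, `(a·f)(x,y) = f(x, ya)`; predual of the right
module action of `A` on `(A ⊗̂ A)**`. -/
def rightBil (a : A) : BilForms A →L[ℂ] BilForms A :=
  compL ℂ A (NormedSpace.Dual ℂ A) (NormedSpace.Dual ℂ A)
    ((compL ℂ A A ℂ).flip ((ContinuousLinearMap.mul ℂ A).flip a))

variable {A}

/-- The left module action `a · m` of `A` on `(A ⊗̂ A)**`, extending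
`a · (x ⊗ y) = (a x) ⊗ y`. -/
def tsmulL (a : A) (m : TensorBidual A) : TensorBidual A := m.comp (leftBil A a)

/-- The right module action `m · a` of `A` on `(A ⊗̂ A)**`, extending
`(x ⊗ y) · a = x ⊗ (y a)`. -/
def tsmulR (a : A) (m : TensorBidual A) : TensorBidual A := m.comp (rightBil A a)

variable (A)

/-- The adjoint `π_A* : A* → (A ⊗̂ A)*` of the product morphism `π_A`, namely
`(π_A* f)(x, y) = f (x y)`. -/
def piStar : NormedSpace.Dual ℂ A →L[ℂ] BilForms A :=
  ((compL ℂ A (A →L[ℂ] A) (NormedSpace.Dual ℂ A)).flip (ContinuousLinearMap.mul ℂ A)).comp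
    (compL ℂ A A ℂ)

variable {A}

/-- The second adjoint `π_A** : (A ⊗̂ A)** → A**` of the product morphism. -/
def piSS (m : TensorBidual A) : Bidual A := m.comp (piStar A)

variable (A)

/-- The map `f ↦ f·a` on `A*`, `(f·a)(x) = f(ax)`. -/
def dualROp (a : A) : NormedSpace.Dual ℂ A →L[ℂ] NormedSpace.Dual ℂ A :=
  (compL ℂ A A ℂ).flip (ContinuousLinearMap.mul ℂ A a)

/-- The map `f ↦ a·f` on `A*`, `(a·f)(x) = f(xa)`. -/
def dualLOp (a : A) : NormedSpace.Dual ℂ A →L[ℂ] NormedSpace.Dual ℂ A :=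
  (compL ℂ A A ℂ).flip ((ContinuousLinearMap.mul ℂ A).flip a)

variable {A}

/-- The product `a · Φ` of `a ∈ A` and `Φ ∈ A**`: `(a·Φ)(f) = Φ(f·a)`. -/
def bsmulL (a : A) (Φ : Bidual A) : Bidual A := Φ.comp (dualROp A a)

/-- The product `Φ · a` of `Φ ∈ A**` and `a ∈ A`: `(Φ·a)(f) = Φ(a·f)`. -/
def bsmulR (a : A) (Φ : Bidual A) : Bidual A := Φ.comp (dualLOp A a)

/-- The canonical isometric embedding of `A` into its bidual. -/
def inclB (a : A) : Bidual A := NormedSpace.inclusionInDoubleDual ℂ A a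

variable (A)

/-- A Banach algebra `A` is *strong pseudo-amenable* if there is a (not necessarily bounded)
net `(m_α)` in `(A ⊗̂ A)**` such that `a·m_α − m_α·a → 0` and
`a·π_A**(m_α) = π_A**(m_α)·a → a` for every `a ∈ A`. -/
def StrongPseudoAmenable : Prop :=
  ∃ (D : DirSys) (m : D.ι → TensorBidual A),
    (∀ a : A, D.Tendsto (fun α => tsmulL a (m α) - tsmulR a (m α)) 0) ∧
    (∀ (a : A) (α : D.ι), bsmulL a (piSS (m α)) = bsmulR a (piSS (m α))) ∧
    (∀ a : A, D.Tendsto (fun α => bsmulR a (piSS (m α))) (inclB a))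

/-- A Banach algebra `A` is *pseudo-amenable* if there is a (not necessarily bounded)
net `(m_α)` in `A ⊗̂ A` such that `a·m_α − m_α·a → 0` and `π_A(m_α)a → a` for every `a ∈ A`. -/
def PseudoAmenable : Prop :=
  ∃ (D : DirSys) (m : D.ι → TensorBidual A),
    (∀ α, m α ∈ ptp A) ∧
    (∀ a : A, D.Tendsto (fun α => tsmulL a (m α) - tsmulR a (m α)) 0) ∧
    (∀ a : A, D.Tendsto (fun α => bsmulR a (piSS (m α))) (inclB a))

/-- A Banach algebra `A` is *pseudo-contractible* if there is a net `(m_α)` in `A ⊗̂ A`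
such that `a·m_α = m_α·a` and `π_A(m_α)a → a` for every `a ∈ A`. -/
def PseudoContractible : Prop :=
  ∃ (D : DirSys) (m : D.ι → TensorBidual A),
    (∀ α, m α ∈ ptp A) ∧
    (∀ (a : A) (α : D.ι), tsmulL a (m α) = tsmulR a (m α)) ∧
    (∀ a : A, D.Tendsto (fun α => bsmulR a (piSS (m α))) (inclB a))

/-- A Banach algebra `A` is *amenable* if it has a bounded approximate diagonal: a bounded
net `(m_α)` in `A ⊗̂ A` such that `a·m_α − m_α·a → 0` and `π_A(m_α)a → a` for every `a ∈ A`. -/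
def AmenableBanachAlgebra : Prop :=
  ∃ (D : DirSys) (m : D.ι → TensorBidual A) (C : ℝ),
    (∀ α, m α ∈ ptp A) ∧
    (∀ α, ‖m α‖ ≤ C) ∧
    (∀ a : A, D.Tendsto (fun α => tsmulL a (m α) - tsmulR a (m α)) 0) ∧
    (∀ a : A, D.Tendsto (fun α => bsmulR a (piSS (m α))) (inclB a))

end

/-- A character on `A`: a nonzero multiplicative linear functional. -/
def IsCharacter (A : Type) [NonUnitalNormedRing A] [NormedSpace ℂ A] (φ : A →ₗ[ℂ] ℂ) : Prop :=
  φ ≠ 0 ∧ ∀ a b : A, φ (a * b) = φ a * φ b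

/-- `A` is approximately left `φ`-amenable: there is a (not necessarily bounded) net `(n_α)`
in `A` with `a n_α − φ(a) n_α → 0` and `φ(n_α) → 1` for every `a ∈ A`. -/
def ApproximatelyLeftCharAmenable (A : Type) [NonUnitalNormedRing A] [NormedSpace ℂ A]
    (φ : A →ₗ[ℂ] ℂ) : Prop :=
  ∃ (D : DirSys) (n : D.ι → A),
    (∀ a : A, D.Tendsto (fun α => a * n α - φ a • n α) 0) ∧
    D.Tendsto (fun α => φ (n α)) 1

section CharBound

variable {A : Type} [NonUnitalNormedRing A] [NormedSpace ℂ A]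
  [IsScalarTower ℂ A A] [SMulCommClass ℂ A A]

lemma char_norm_le [CompleteSpace A] (φ : A →ₗ[ℂ] ℂ)
    (hm : ∀ a b : A, φ (a * b) = φ a * φ b) (a : A) : ‖φ a‖ ≤ ‖a‖ := by
  by_contra h
  push_neg at h
  have hne : φ a ≠ 0 := by
    intro h0
    rw [h0, norm_zero] at h
    exact absurd h (not_lt.2 (norm_nonneg a))
  set b : A := (φ a)⁻¹ • a with hb
  have hφb : φ b = 1 := by
    simp [hb, map_smul, inv_mul_cancel₀ hne]
  have hbn : ‖b‖ < 1 := by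
    rw [hb, norm_smul, norm_inv]
    rw [inv_mul_lt_iff₀ (norm_pos_iff.2 hne)]
    simpa using h
  set c : ℕ → A := fun n => (fun x => b * x)^[n] b with hc
  have hcs : ∀ n, c (n+1) = b * c n := fun n => Function.iterate_succ_apply' _ _ _
  have hcb : ∀ n, ‖c n‖ ≤ ‖b‖ ^ n * ‖b‖ := by
    intro n; induction n with
    | zero => simp [hc]
    | succ n ih =>
      rw [hcs]
      calc ‖b * c n‖ ≤ ‖b‖ * ‖c n‖ := norm_mul_le _ _
        _ ≤ ‖b‖ * (‖b‖ ^ n * ‖b‖) := mul_le_mul_of_nonneg_left ih (norm_nonneg b)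
        _ = ‖b‖ ^ (n+1) * ‖b‖ := by ring
  have hsum : Summable c :=
    Summable.of_norm_bounded
      ((summable_geometric_of_lt_one (norm_nonneg b) hbn).mul_right ‖b‖) hcb
  set s : A := ∑' n, c n with hs
  have hbs : b * s = s - b := by
    have h1 : b * s = ∑' n, b * c n := by
      simpa using (ContinuousLinearMap.mul ℂ A b).map_tsum hsum
    have h2 : ∑' n, b * c n = ∑' n, c (n+1) := by
      exact tsum_congr fun n => (hcs n).symm
    have h3 : s = c 0 + ∑' n, c (n+1) := Summable.tsum_eq_zero_add hsum
    have hc0 : c 0 = b := rfl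
    rw [h1, h2]
    rw [hc0] at h3
    rw [h3, add_sub_cancel_left]
  have h4 := hm b s
  rw [hbs, map_sub, hφb] at h4
  rw [one_mul] at h4
  exact one_ne_zero (sub_eq_self.mp h4)

end CharBound

lemma DirSys.finset_le (D : DirSys) {β : Type*} (s : Finset β) (f : β → D.ι) :
    ∃ k, ∀ b ∈ s, D.le (f b) k := by
  classical
  induction s using Finset.induction_on with
  | empty => exact ⟨D.nonempty.some, by simp⟩
  | @insert a s ha ih =>
    obtain ⟨k, hk⟩ := ih
    obtain ⟨k', hk1, hk2⟩ := D.directed (f a) k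
    refine ⟨k', fun b hb => ?_⟩
    rcases Finset.mem_insert.1 hb with rfl | hb
    · exact hk1
    · exact D.trans (hk b hb) hk2

section Key
variable {A : Type} [NonUnitalNormedRing A] [NormedSpace ℂ A]
  [IsScalarTower ℂ A A] [SMulCommClass ℂ A A]

set_option maxHeartbeats 2000000 in
lemma key_exists [CompleteSpace A] (φ : A →ₗ[ℂ] ℂ) (hφ : IsCharacter A φ)
    (hA : StrongPseudoAmenable A) (F : Finset A) {ε : ℝ} (hε : 0 < ε) :
    ∃ n : A, (∀ a ∈ F, ‖a * n - φ a • n‖ < ε) ∧ ‖φ n - 1‖ < ε := by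
  classical
  -- continuous version of φ
  have hbd : ∀ a : A, ‖φ a‖ ≤ ‖a‖ := char_norm_le φ hφ.2
  set φc : NormedSpace.Dual ℂ A := LinearMap.mkContinuous φ 1 (fun a => by
    simpa using hbd a) with hφcdef
  have hφc : ∀ x : A, φc x = φ x := fun x => rfl
  have hφcn : ‖φc‖ ≤ 1 := LinearMap.mkContinuous_norm_le _ zero_le_one _
  -- an element with φ a₀ = 1
  obtain ⟨x₀, hx₀⟩ : ∃ x : A, φ x ≠ 0 := by
    by_contra hx
    push_neg at hx
    exact hφ.1 (LinearMap.ext fun x => by simpa using hx x)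
  set a₀ : A := (φ x₀)⁻¹ • x₀ with ha₀def
  have ha₀ : φ a₀ = 1 := by simp [ha₀def, map_smul, inv_mul_cancel₀ hx₀]
  obtain ⟨D, m, h1, -, h3⟩ := hA
  set k : ℕ := F.card with hk
  set δ : ℝ := ε / (8 * (k + 1)) with hδ
  have hδpos : 0 < δ := by positivity
  -- choose a common index
  have h1' : ∀ a : A, ∃ i, ∀ j, D.le i j → ‖tsmulL a (m j) - tsmulR a (m j)‖ < δ := by
    intro a
    obtain ⟨i, hi⟩ := h1 a δ hδpos
    exact ⟨i, fun j hj => by simpa [dist_zero_right] using hi j hj⟩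
  choose I hI using h1'
  obtain ⟨i₁, hi₁⟩ := DirSys.finset_le D F I
  obtain ⟨i₂, hi₂⟩ := h3 a₀ δ hδpos
  obtain ⟨α, hα1, hα2⟩ := D.directed i₁ i₂
  set μ : TensorBidual A := m α with hμ
  have hdiff : ∀ a ∈ F, ‖tsmulL a μ - tsmulR a μ‖ < δ :=
    fun a ha => hI a α (D.trans (hi₁ a ha) hα1)
  have hΦ : ‖bsmulR a₀ (piSS μ) - inclB a₀‖ < δ := by
    simpa [dist_eq_norm] using hi₂ α hα2
  -- the slice map
  set sl : NormedSpace.Dual ℂ A →L[ℂ] BilForms A :=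
    (ContinuousLinearMap.smulRightL ℂ A (NormedSpace.Dual ℂ A)).flip φc with hsldef
  have hsl : ∀ (f : NormedSpace.Dual ℂ A) (x y : A), sl f x y = f x * φc y := fun f x y => rfl
  have hslnorm : ∀ f : NormedSpace.Dual ℂ A, ‖sl f‖ ≤ ‖f‖ := by
    intro f
    have : sl f = f.smulRight φc := rfl
    rw [this, ContinuousLinearMap.norm_smulRight_apply]
    calc ‖f‖ * ‖φc‖ ≤ ‖f‖ * 1 := mul_le_mul_of_nonneg_left hφcn (norm_nonneg f)
      _ = ‖f‖ := mul_one _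
  have hL : ∀ (a : A) (f : NormedSpace.Dual ℂ A),
      sl (dualROp A a f) = leftBil A a (sl f) := by
    intro a f
    ext x y
    show (dualROp A a f) x * φc y = sl f (a * x) y
    rw [hsl]
    rfl
  have hR : ∀ (a : A) (f : NormedSpace.Dual ℂ A),
      rightBil A a (sl f) = φ a • sl f := by
    intro a f
    ext x y
    show sl f x (y * a) = (φ a • sl f) x y
    rw [hsl]
    have : (φ a • sl f) x y = φ a * (sl f x y) := rfl
    simp only [this, hsl, hφc, hφ.2]
    ring
  have hπ : sl φc = piStar A φc := by
    ext x y
    show φc x * φc y = φc (x * y)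
    simp only [hφc, hφ.2]
  have hA₀ : dualLOp A a₀ φc = φc := by
    ext x
    show φc (x * a₀) = φc x
    simp only [hφc, hφ.2, ha₀, mul_one]
  -- the sliced element N of the bidual
  set N : Bidual A := μ.comp sl with hNdef
  have hNr : ∀ a ∈ F, ∀ f : NormedSpace.Dual ℂ A,
      ‖N (dualROp A a f) - φ a * N f‖ ≤ δ * ‖f‖ := by
    intro a ha f
    have e1 : N (dualROp A a f) = (tsmulL a μ) (sl f) := by
      show μ (sl (dualROp A a f)) = μ (leftBil A a (sl f))
      rw [hL]
    have e2 : φ a * N f = (tsmulR a μ) (sl f) := by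
      show φ a * μ (sl f) = μ (rightBil A a (sl f))
      rw [hR, map_smul, smul_eq_mul]
    rw [e1, e2]
    calc ‖(tsmulL a μ) (sl f) - (tsmulR a μ) (sl f)‖
        = ‖(tsmulL a μ - tsmulR a μ) (sl f)‖ := by
          rw [ContinuousLinearMap.sub_apply]
      _ ≤ ‖tsmulL a μ - tsmulR a μ‖ * ‖sl f‖ := ContinuousLinearMap.le_opNorm _ _
      _ ≤ δ * ‖f‖ := mul_le_mul (hdiff a ha).le (hslnorm f) (ContinuousLinearMap.opNorm_nonneg _) hδpos.le
  have hN1 : ‖N φc - 1‖ ≤ δ := by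
    have e1 : N φc = (bsmulR a₀ (piSS μ)) φc := by
      show μ (sl φc) = (piSS μ) (dualLOp A a₀ φc)
      rw [hA₀, hπ]
      rfl
    have e2 : (inclB a₀ : Bidual A) φc = 1 := by
      show φc a₀ = 1
      rw [hφc, ha₀]
    calc ‖N φc - 1‖ = ‖(bsmulR a₀ (piSS μ) - inclB a₀) φc‖ := by
          rw [ContinuousLinearMap.sub_apply, e1, e2]
      _ ≤ ‖bsmulR a₀ (piSS μ) - inclB a₀‖ * ‖φc‖ := ContinuousLinearMap.le_opNorm _ _
      _ ≤ δ * 1 := mul_le_mul hΦ.le hφcn (norm_nonneg _) hδpos.le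
      _ = δ := mul_one _
  -- separation argument
  by_contra hcon
  push_neg at hcon
  set P : A →L[ℂ] (↥F → A) := ContinuousLinearMap.pi
    (fun a : ↥F => ContinuousLinearMap.mul ℂ A (a : A)
      - φ (a : A) • ContinuousLinearMap.id ℂ A) with hPdef
  set vc : A →L[ℂ] ((↥F → A) × ℂ) := P.prod φc with hvcdef
  have hvc1 : ∀ (n : A) (a : ↥F), (vc n).1 a = (a : A) * n - φ (a : A) • n := fun n a => rfl
  have hvc2 : ∀ n : A, (vc n).2 = φ n := fun n => rfl
  set v : A → ((↥F → A) × ℂ) := fun n => vc n + (0, -1) with hvdef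
  have hv1 : ∀ (n : A) (a : ↥F), (v n).1 a = (a : A) * n - φ (a : A) • n := by
    intro n a
    show (vc n).1 a + (0 : ↥F → A) a = _
    rw [hvc1]; simp
  have hv2 : ∀ n : A, (v n).2 = φ n - 1 := by
    intro n
    show (vc n).2 + (-1) = _
    rw [hvc2]; ring
  have hvnorm : ∀ n : A, ε ≤ ‖v n‖ := by
    intro n
    by_cases hn : ∀ a ∈ F, ‖a * n - φ a • n‖ < ε
    · calc ε ≤ ‖φ n - 1‖ := hcon n hn
        _ = ‖(v n).2‖ := by rw [hv2]
        _ ≤ ‖v n‖ := norm_snd_le _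
    · push_neg at hn
      obtain ⟨a, ha, hge⟩ := hn
      calc ε ≤ ‖a * n - φ a • n‖ := hge
        _ = ‖(v n).1 ⟨a, ha⟩‖ := by rw [hv1]
        _ ≤ ‖(v n).1‖ := norm_le_pi_norm _ _
        _ ≤ ‖v n‖ := norm_fst_le _
  have hconv : Convex ℝ (Set.range v) := by
    rintro x ⟨n, rfl⟩ y ⟨n', rfl⟩ p q hp hq hpq
    refine ⟨p • n + q • n', ?_⟩
    have hc0 : p • ((0, -1) : (↥F → A) × ℂ) + q • (0, -1) = (0, -1) := by
      rw [← add_smul, hpq, one_smul]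
    show vc (p • n + q • n') + (0, -1) = p • (vc n + (0, -1)) + q • (vc n' + (0, -1))
    rw [map_add, vc.map_smul_of_tower, vc.map_smul_of_tower, smul_add, smul_add,
      add_add_add_comm, hc0]
  have hdisj : Disjoint (Metric.ball (0 : (↥F → A) × ℂ) ε) (Set.range v) := by
    rw [Set.disjoint_left]
    rintro x hx ⟨n, rfl⟩
    rw [mem_ball_zero_iff] at hx
    exact absurd hx (not_lt.2 (hvnorm n))
  obtain ⟨g, u, hg1, hg2⟩ :=
    geometric_hahn_banach_open (convex_ball 0 ε) Metric.isOpen_ball hconv hdisj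
  have hu : 0 < u := by
    have := hg1 0 (Metric.mem_ball_self hε)
    simpa using this
  have hgv : ∀ n : A, u ≤ g (vc n) + g (0, -1) := by
    intro n
    have h := hg2 (v n) ⟨n, rfl⟩
    rw [show v n = vc n + (0, -1) from rfl, map_add] at h
    exact h
  have hgW : ∀ n : A, g (vc n) = 0 := by
    intro n
    by_contra ht
    have hs : ∀ s : ℝ, u ≤ s * g (vc n) + g (0, -1) := by
      intro s
      have h := hgv (s • n)
      rwa [vc.map_smul_of_tower, map_smul, smul_eq_mul] at h
    have h2 := hs ((u - g (0, -1) - 1) / g (vc n))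
    rw [div_mul_cancel₀ _ ht] at h2
    linarith
  set C : ℝ := 2 * u / ε with hC
  have hCpos : 0 < C := by positivity
  have hgC : ∀ x : (↥F → A) × ℂ, g x ≤ C * ‖x‖ := by
    intro x
    rcases eq_or_ne x 0 with rfl | hx
    · simp only [map_zero, norm_zero, mul_zero]; exact le_rfl
    · have hx0 : 0 < ‖x‖ := norm_pos_iff.2 hx
      have hmem : (ε / (2 * ‖x‖)) • x ∈ Metric.ball (0 : (↥F → A) × ℂ) ε := by
        have he : (ε / (2 * ‖x‖)) * ‖x‖ = ε / 2 := by
          field_simp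
        rw [mem_ball_zero_iff, norm_smul, Real.norm_eq_abs, abs_of_pos (by positivity), he]
        linarith
      have hlt := hg1 _ hmem
      rw [map_smul, smul_eq_mul] at hlt
      have h3 : ε * g x < u * (2 * ‖x‖) := by
        rw [div_mul_eq_mul_div, div_lt_iff₀ (by positivity : (0:ℝ) < 2 * ‖x‖)] at hlt
        linarith
      rw [hC, div_mul_eq_mul_div, le_div_iff₀ hε]
      linarith
  have habs : ∀ x : (↥F → A) × ℂ, ‖g x‖ ≤ C * ‖x‖ := by
    intro x
    rw [Real.norm_eq_abs, abs_le]
    constructor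
    · have h := hgC (-x); rw [map_neg, norm_neg] at h; linarith
    · exact hgC x
  set G : ((↥F → A) × ℂ) →L[ℂ] ℂ := StrongDual.extendRCLike g with hGdef
  have hGre : ∀ x, (G x).re = g x := by
    intro x
    rw [hGdef, StrongDual.extendRCLike_apply]
    simp [Complex.sub_re, Complex.mul_re]
  have hGnorm : ∀ x, ‖G x‖ ≤ C * ‖x‖ := by
    intro x
    calc ‖G x‖ ≤ ‖G‖ * ‖x‖ := G.le_opNorm x
      _ ≤ C * ‖x‖ := by
        apply mul_le_mul_of_nonneg_right _ (norm_nonneg x)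
        rw [hGdef, StrongDual.norm_extendRCLike]
        exact ContinuousLinearMap.opNorm_le_bound g hCpos.le habs
  set Sg : ↥F → (A →L[ℂ] (↥F → A)) := fun a =>
    ContinuousLinearMap.pi (Pi.single a (ContinuousLinearMap.id ℂ A)) with hSgdef
  have hSg1 : ∀ (a : ↥F) (y : A), Sg a y = Pi.single a y := by
    intro a y
    funext b
    rw [hSgdef, ContinuousLinearMap.pi_apply]
    rcases eq_or_ne b a with rfl | hba
    · simp
    · simp [Pi.single_eq_of_ne hba]
  set fa : ↥F → NormedSpace.Dual ℂ A := fun a =>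
    G.comp ((ContinuousLinearMap.inl ℂ (↥F → A) ℂ).comp (Sg a)) with hfadef
  have hfaval : ∀ (a : ↥F) (y : A), fa a y = G (Pi.single a y, 0) := by
    intro a y
    show G ((Sg a y, 0)) = _
    rw [hSg1]
  have hfaC : ∀ (a : ↥F) (y : A), ‖fa a y‖ ≤ C * ‖y‖ := by
    intro a y
    rw [hfaval]
    calc ‖G (Pi.single a y, 0)‖ ≤ C * ‖((Pi.single a y, 0) : (↥F → A) × ℂ)‖ := hGnorm _
      _ = C * ‖y‖ := by
        rw [Prod.norm_def]
        simp [Pi.norm_single]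
  have hfanorm : ∀ a : ↥F, ‖fa a‖ ≤ C :=
    fun a => ContinuousLinearMap.opNorm_le_bound _ hCpos.le (hfaC a)
  set w : ℂ := G (0, 1) with hwdef
  have hwu : u ≤ -w.re := by
    have h0 := hgv 0
    rw [map_zero, map_zero, zero_add] at h0
    have hneg : ((0, -1) : (↥F → A) × ℂ) = -(0, 1) := by
      refine Prod.ext ?_ ?_ <;> simp
    rw [hneg, map_neg] at h0
    have := hGre ((0, 1) : (↥F → A) × ℂ)
    rw [hwdef]
    rw [this]
    linarith
  have hwC : ‖w‖ ≤ C := by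
    have h := hGnorm ((0, 1) : (↥F → A) × ℂ)
    have h1 : ‖((0, 1) : (↥F → A) × ℂ)‖ = 1 := by
      rw [Prod.norm_def]
      simp
    rw [h1, mul_one] at h
    exact h
  have hdec : ∀ (x : ↥F → A) (z : ℂ),
      G (x, z) = (∑ a : ↥F, fa a (x a)) + z * w := by
    intro x z
    have hxz : ((x, z) : (↥F → A) × ℂ)
        = (∑ a : ↥F, ((Pi.single a (x a) : ↥F → A), (0 : ℂ))) + z • ((0, 1) : (↥F → A) × ℂ) := by
      refine Prod.ext ?_ ?_
      · rw [Prod.fst_add, Prod.fst_sum]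
        have hz : (z • ((0, 1) : (↥F → A) × ℂ)).1 = 0 := by simp [Prod.smul_fst]
        rw [hz, add_zero]
        exact (Finset.univ_sum_single x).symm
      · rw [Prod.snd_add, Prod.snd_sum]
        simp
    rw [hxz, map_add, map_sum, map_smul, smul_eq_mul]
    congr 1
    exact Finset.sum_congr rfl fun a _ => (hfaval a (x a)).symm
  set Fd : NormedSpace.Dual ℂ A :=
    (∑ a : ↥F, (dualROp A (a : A) (fa a) - φ (a : A) • fa a)) + w • φc with hFddef
  have hFdval : ∀ n : A, Fd n = G (vc n) := by
    intro n
    have h2 : G (vc n) = (∑ a : ↥F, fa a ((vc n).1 a)) + (vc n).2 * w := by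
      conv_lhs => rw [← Prod.mk.eta (p := vc n)]
      rw [hdec]
    rw [h2, hvc2]
    have h3 : Fd n = (∑ a : ↥F, ((dualROp A (a : A) (fa a)) n - φ (a : A) * fa a n))
        + w * (φc n) := by
      simp [hFddef, ContinuousLinearMap.sum_apply, ContinuousLinearMap.sub_apply,
        ContinuousLinearMap.add_apply, ContinuousLinearMap.smul_apply, smul_eq_mul]
    rw [h3, hφc, mul_comm w (φ n)]
    congr 1
    refine Finset.sum_congr rfl fun a _ => ?_
    rw [hvc1, map_sub, map_smul, smul_eq_mul]
    rfl
  have hFd0 : ∀ n : A, Fd n = 0 := by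
    have hre : ∀ n : A, (Fd n).re = 0 := by
      intro n; rw [hFdval, hGre, hgW]
    intro n
    have h1 := hre n
    have h2 := hre (Complex.I • n)
    rw [map_smul, smul_eq_mul, Complex.mul_re, Complex.I_re, Complex.I_im] at h2
    have him : (Fd n).im = 0 := by simpa using h2
    apply Complex.ext <;> simp [h1, him]
  have hzero : (∑ a : ↥F, (N (dualROp A (a : A) (fa a)) - φ (a : A) * N (fa a)))
      + w * N φc = 0 := by
    have hFdz : Fd = 0 := ContinuousLinearMap.ext hFd0
    have hNz : N Fd = 0 := by rw [hFdz, map_zero]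
    rw [← hNz, hFddef]
    simp [map_add, map_sum, map_sub, map_smul, smul_eq_mul]
  have hS : ‖∑ a : ↥F, (N (dualROp A (a : A) (fa a)) - φ (a : A) * N (fa a))‖
      ≤ (k : ℝ) * (δ * C) := by
    calc ‖∑ a : ↥F, (N (dualROp A (a : A) (fa a)) - φ (a : A) * N (fa a))‖
        ≤ ∑ a : ↥F, ‖N (dualROp A (a : A) (fa a)) - φ (a : A) * N (fa a)‖ :=
          norm_sum_le _ _
      _ ≤ ∑ _a : ↥F, δ * C := by
          refine Finset.sum_le_sum fun a _ => ?_
          calc ‖N (dualROp A (a : A) (fa a)) - φ (a : A) * N (fa a)‖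
              ≤ δ * ‖fa a‖ := hNr (a : A) a.2 (fa a)
            _ ≤ δ * C := mul_le_mul_of_nonneg_left (hfanorm a) hδpos.le
      _ = (k : ℝ) * (δ * C) := by
          rw [Finset.sum_const, Finset.card_univ, Fintype.card_coe, nsmul_eq_mul, hk]
  have hwNφ : ‖w * N φc‖ ≤ (k : ℝ) * (δ * C) := by
    have hEq : w * N φc
        = -(∑ a : ↥F, (N (dualROp A (a : A) (fa a)) - φ (a : A) * N (fa a))) := by
      linear_combination hzero
    rw [hEq, norm_neg]
    exact hS
  have hwsplit : ‖w‖ ≤ (k : ℝ) * (δ * C) + C * δ := by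
    have hEq : w = w * N φc + w * (1 - N φc) := by ring
    calc ‖w‖ = ‖w * N φc + w * (1 - N φc)‖ := by rw [← hEq]
      _ ≤ ‖w * N φc‖ + ‖w * (1 - N φc)‖ := norm_add_le _ _
      _ ≤ (k : ℝ) * (δ * C) + C * δ := by
          refine add_le_add hwNφ ?_
          rw [norm_mul]
          have h1 : ‖(1 : ℂ) - N φc‖ ≤ δ := by rw [norm_sub_rev]; exact hN1
          exact mul_le_mul hwC h1 (norm_nonneg _) hCpos.le
  have hule : u ≤ ‖w‖ := by
    calc u ≤ -w.re := hwu
      _ ≤ |w.re| := neg_le_abs _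
      _ ≤ ‖w‖ := Complex.abs_re_le_norm w
  have hk1 : ((k : ℝ) + 1) ≠ 0 := ne_of_gt (by linarith [(Nat.cast_nonneg k : (0:ℝ) ≤ k)])
  have hfin : (k : ℝ) * (δ * C) + C * δ = u / 4 := by
    rw [hδ, hC]
    field_simp
    ring
  linarith
end Key


/-- Let `A` be a Banach algebra and `φ` a character on `A`. If `A` is
strong pseudo-amenable, then `A` is approximately left `φ`-amenable. -/
theorem approximatelyLeftCharAmenable_of_strongPseudoAmenable
    (A : Type) [NonUnitalNormedRing A] [NormedSpace ℂ A] [IsScalarTower ℂ A A]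
    [SMulCommClass ℂ A A] [CompleteSpace A]
    (φ : A →ₗ[ℂ] ℂ) (hφ : IsCharacter A φ)
    (hA : StrongPseudoAmenable A) : ApproximatelyLeftCharAmenable A φ := by
  classical
  set D : DirSys :=
    { ι := Finset A × {e : ℝ // 0 < e}
      le := fun i j => i.1 ⊆ j.1 ∧ j.2.1 ≤ i.2.1
      refl := fun i => ⟨subset_rfl, le_rfl⟩
      trans := fun hij hjk => ⟨hij.1.trans hjk.1, hjk.2.trans hij.2⟩
      nonempty := ⟨(∅, ⟨1, one_pos⟩)⟩
      directed := fun i j =>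
        ⟨(i.1 ∪ j.1, ⟨min i.2.1 j.2.1, lt_min i.2.2 j.2.2⟩),
          ⟨Finset.subset_union_left, min_le_left _ _⟩,
          ⟨Finset.subset_union_right, min_le_right _ _⟩⟩ } with hD
  have hex : ∀ i : D.ι, ∃ n : A,
      (∀ a ∈ i.1, ‖a * n - φ a • n‖ < i.2.1) ∧ ‖φ n - 1‖ < i.2.1 :=
    fun i => key_exists φ hφ hA i.1 i.2.2
  choose n hn1 hn2 using hex
  refine ⟨D, n, ?_, ?_⟩
  · intro a ε hε
    refine ⟨({a}, ⟨ε, hε⟩), fun j hj => ?_⟩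
    rw [dist_zero_right]
    have ha : a ∈ j.1 := hj.1 (Finset.mem_singleton_self a)
    exact lt_of_lt_of_le (hn1 j a ha) hj.2
  · intro ε hε
    refine ⟨(∅, ⟨ε, hε⟩), fun j hj => ?_⟩
    rw [dist_eq_norm]
    exact lt_of_lt_of_le (hn2 j) hj.2
end

section
/- Let S be a right-zero semigroup (st = t for all s,t ∈ S) with |S| > 1. Then the semigroup algebra ℓ¹(S) is biflat but not strong pseudo-amenable. -/
/-- `(L, δ)` is a realization of the semigroup algebra `ℓ¹(S)` for the semigroup
multiplication `mulS` on `S`: the `δ s` are the point masses, multiplication is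
convolution (determined by `δ s * δ t = δ (s t)`), finite linear combinations of point
masses carry the `ℓ¹`-norm, and they have dense linear span. -/
def IsL1SemigroupAlgebra (S : Type) (mulS : S → S → S) (L : Type)
    [NonUnitalNormedRing L] [NormedSpace ℂ L] (δ : S → L) : Prop :=
  (∀ s t : S, δ s * δ t = δ (mulS s t)) ∧
  (∀ (F : Finset S) (c : S → ℂ), ‖∑ s ∈ F, c s • δ s‖ = ∑ s ∈ F, ‖c s‖) ∧
  ((Submodule.span ℂ (Set.range δ)).topologicalClosure = ⊤)

/-- A Banach algebra `A` is *biflat* if there is a bounded `A`-bimodule morphism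
`ρ : A → (A ⊗̂ A)**` with `π_A** ∘ ρ = ι_A` (the canonical embedding of `A` in `A**`). -/
def Biflat (A : Type) [NonUnitalNormedRing A] [NormedSpace ℂ A] [IsScalarTower ℂ A A]
    [SMulCommClass ℂ A A] : Prop :=
  ∃ ρ : A →L[ℂ] TensorBidual A,
    (∀ a b : A, ρ (a * b) = tsmulL a (ρ b)) ∧
    (∀ a b : A, ρ (a * b) = tsmulR b (ρ a)) ∧
    (∀ a : A, piSS (ρ a) = inclB a)


section AuxSPA

set_option linter.unusedSectionVars false

variable {L : Type} [NonUnitalNormedRing L] [NormedSpace ℂ L] [IsScalarTower ℂ L L]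
  [SMulCommClass ℂ L L]

theorem myclm_ext_spa {M : Type*} [NormedAddCommGroup M] [NormedSpace ℂ M] {S : Type} {δ : S → L}
    (hd : (Submodule.span ℂ (Set.range δ)).topologicalClosure = ⊤)
    (T U : L →L[ℂ] M) (h : ∀ s, T (δ s) = U (δ s)) : T = U := by
  have hdense : Dense ((Submodule.span ℂ (Set.range δ) : Submodule ℂ L) : Set L) :=
    Submodule.dense_iff_topologicalClosure_eq_top.mpr hd
  have heq : Set.EqOn T U ((Submodule.span ℂ (Set.range δ) : Submodule ℂ L) : Set L) := by
    intro x hx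
    exact LinearMap.eqOn_span (by rintro _ ⟨u, rfl⟩; exact h u) hx
  exact ContinuousLinearMap.ext fun x =>
    congrFun (Continuous.ext_on hdense T.continuous U.continuous heq) x

/-- `y ↦ e ⊗ y` as a continuous linear map. -/
noncomputable def rhoSPA (e : L) : L →L[ℂ] TensorBidual L :=
  ((ContinuousLinearMap.compL ℂ (BilForms L) (NormedSpace.Dual ℂ L) ℂ).flip
      (ContinuousLinearMap.apply ℂ (NormedSpace.Dual ℂ L) e)).comp
    (ContinuousLinearMap.apply ℂ ℂ)

lemma rhoSPA_apply (e y : L) : rhoSPA e y = elemT e y := rfl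

/-- `x ↦ x ⊗ b` as a continuous linear map. -/
noncomputable def elemTL (b : L) : L →L[ℂ] TensorBidual L :=
  ((ContinuousLinearMap.compL ℂ (BilForms L) (NormedSpace.Dual ℂ L) ℂ)
      (ContinuousLinearMap.apply ℂ ℂ b)).comp (ContinuousLinearMap.apply ℂ (NormedSpace.Dual ℂ L))

lemma elemTL_apply (b x : L) : elemTL b x = elemT x b := rfl

lemma tsmulR_elemT (b x y : L) : tsmulR b (elemT x y) = elemT x (y * b) := rfl
lemma tsmulL_elemT (a x y : L) : tsmulL a (elemT x y) = elemT (a * x) y := rfl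
lemma piSS_elemT (x y : L) (f : NormedSpace.Dual ℂ L) : piSS (elemT x y) f = f (x * y) := rfl
lemma inclB_apply (a : L) (f : NormedSpace.Dual ℂ L) : inclB a f = f a := rfl

set_option maxSynthPendingDepth 3 in
lemma key_spa {S : Type} {δ : S → L}
    (hd : (Submodule.span ℂ (Set.range δ)).topologicalClosure = ⊤)
    (e : L) (he : ∀ u : S, δ u * e = e) (hleft : ∀ (u : S) (x : L), δ u * x = x)
    (a b : L) : elemT (a * e) b = elemT e (a * b) := by
  let T : L →L[ℂ] TensorBidual L :=
    (elemTL b).comp ((ContinuousLinearMap.mul ℂ L).flip e)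
  let U : L →L[ℂ] TensorBidual L :=
    (rhoSPA e).comp ((ContinuousLinearMap.mul ℂ L).flip b)
  have hTU : ∀ u : S, T (δ u) = U (δ u) := by
    intro u
    show elemT (δ u * e) b = elemT e (δ u * b)
    rw [he u, hleft u b]
  have h2 : T a = U a :=
    DFunLike.congr_fun (myclm_ext_spa (M := TensorBidual L) hd T U hTU) a
  exact h2

end AuxSPA

/-- Let `S` be a right-zero semigroup (`s t = t`) with more than one
element.  Then `ℓ¹(S)` is biflat but not strong pseudo-amenable. -/
theorem biflat_not_strongPseudoAmenable_rightZeroSemigroupAlgebra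
    (S : Type) (hS : ∃ s t : S, s ≠ t)
    (L : Type) [NonUnitalNormedRing L] [NormedSpace ℂ L] [IsScalarTower ℂ L L]
    [SMulCommClass ℂ L L] [CompleteSpace L]
    (δ : S → L) (hL : IsL1SemigroupAlgebra S (fun _ t => t) L δ) :
    Biflat L ∧ ¬ StrongPseudoAmenable L := by
  classical
  obtain ⟨s, t, hst⟩ := hS
  obtain ⟨hmul, hnorm, hd⟩ := hL
  -- every point mass is a left identity
  have hleft : ∀ (u : S) (x : L), δ u * x = x := by
    intro u x
    have h := myclm_ext_spa hd (ContinuousLinearMap.mul ℂ L (δ u))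
      (ContinuousLinearMap.id ℂ L) (fun v => by simpa using hmul u v)
    simpa using congrFun (congrArg (fun (T : L →L[ℂ] L) => (T : L → L)) h) x
  -- the norm of the difference of two distinct point masses is 2
  have hnorm2 : ‖δ s - δ t‖ = 2 := by
    have h := hnorm {s, t} (fun u => if u = s then 1 else -1)
    rw [Finset.sum_pair hst, Finset.sum_pair hst, if_pos rfl,
      if_neg (Ne.symm hst)] at h
    simp only [one_smul, neg_smul, norm_one, norm_neg] at h
    rw [sub_eq_add_neg, h]
    norm_num
  constructor
  · -- Biflat
    refine ⟨rhoSPA (δ s), ?_, ?_, ?_⟩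
    · -- left module morphism
      intro a b
      have key : elemT (a * δ s) b = elemT (δ s) (a * b) :=
        key_spa hd (δ s) (fun u => hmul u s) hleft a b
      rw [rhoSPA_apply, rhoSPA_apply, tsmulL_elemT, key]
    · -- right module morphism
      intro a b
      rw [rhoSPA_apply, rhoSPA_apply, tsmulR_elemT]
    · -- π** ∘ ρ = ι
      intro a
      ext f
      rw [rhoSPA_apply, piSS_elemT, inclB_apply, hleft s a]
  · -- not strong pseudo-amenable
    rintro ⟨D, m, _h1, h2, h3⟩
    have hbL : ∀ (u : S) (Φ : Bidual L), bsmulL (δ u) Φ = Φ := by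
      intro u Φ
      have hop : dualROp L (δ u) = ContinuousLinearMap.id ℂ (NormedSpace.Dual ℂ L) := by
        ext f x
        show f (δ u * x) = f x
        rw [hleft u x]
      show Φ.comp (dualROp L (δ u)) = Φ
      rw [hop, ContinuousLinearMap.comp_id]
    have hC : ∀ u : S, D.Tendsto (fun α => piSS (m α)) (inclB (δ u)) := by
      intro u
      have h3u := h3 (δ u)
      have heq : (fun α => bsmulR (δ u) (piSS (m α))) = fun α => piSS (m α) := by
        funext α
        rw [← h2 (δ u) α, hbL u]
      rwa [heq] at h3u
    obtain ⟨i, hi⟩ := hC s 1 one_pos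
    obtain ⟨j, hj⟩ := hC t 1 one_pos
    obtain ⟨k, hki, hkj⟩ := D.directed i j
    have d1 := hi k hki
    have d2 := hj k hkj
    have htriangle : dist (inclB (δ s) : Bidual L) (inclB (δ t)) ≤
        dist (piSS (m k)) (inclB (δ s)) + dist (piSS (m k)) (inclB (δ t)) :=
      dist_triangle_left _ _ _
    have hdist : dist (inclB (δ s) : Bidual L) (inclB (δ t)) = 2 := by
      have hsub : (inclB (δ s) : Bidual L) - inclB (δ t) = inclB (δ s - δ t) := by
        show _ = NormedSpace.inclusionInDoubleDual ℂ L (δ s - δ t)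
        rw [map_sub]; rfl
      rw [dist_eq_norm, hsub]
      have hn := (NormedSpace.inclusionInDoubleDualLi ℂ (E := L)).norm_map (δ s - δ t)
      rw [show (inclB (δ s - δ t) : Bidual L) =
        NormedSpace.inclusionInDoubleDualLi ℂ (E := L) (δ s - δ t) from rfl, hn, hnorm2]
    rw [hdist] at htriangle
    linarith
end
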